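/- Let A be an n×n real SPD matrix with (unique) SPD square root A^{1/2}, and let M be an invertible n×n real matrix. Then M + Mᵀ − A is SPD if and only if the spectral (Euclidean operator) norm of I − A^{1/2} M⁻¹ A^{1/2} is strictly less than 1. -/

import Mathlib

open Matrix

/-- A finite-dimensional contraction criterion: if `‖T v‖ < ‖v‖` for all `v ≠ 0`,
then the operator norm is `< 1`. -/
lemma aux_norm_lt_one {n : ℕ}
    (T : EuclideanSpace ℝ (Fin n) →L[ℝ] EuclideanSpace ℝ (Fin n))
    (h : ∀ v : EuclideanSpace ℝ (Fin n), v ≠ 0 → ‖T v‖ < ‖v‖) : ‖T‖ < 1 := by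
  rcases Nat.eq_zero_or_pos n with hn | hn
  · haveI : Subsingleton (EuclideanSpace ℝ (Fin n)) := by
      subst hn; infer_instance
    have hT : ‖T‖ ≤ 0 := T.opNorm_le_bound le_rfl fun x => by
      rw [Subsingleton.elim x 0]; simp
    linarith
  · have hne : (Metric.sphere (0 : EuclideanSpace ℝ (Fin n)) 1).Nonempty := by
      refine ⟨EuclideanSpace.single ⟨0, hn⟩ (1 : ℝ), ?_⟩
      simp [mem_sphere_zero_iff_norm, EuclideanSpace.norm_single]
    obtain ⟨x₀, hx₀s, hmax⟩ :=
      (isCompact_sphere (0 : EuclideanSpace ℝ (Fin n)) 1).exists_isMaxOn hne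
        ((T.continuous.norm).continuousOn)
    have hx₀n : ‖x₀‖ = 1 := mem_sphere_zero_iff_norm.1 hx₀s
    have hx₀ : x₀ ≠ 0 := by
      intro h0; rw [h0, norm_zero] at hx₀n; norm_num at hx₀n
    have hTle : ‖T‖ ≤ ‖T x₀‖ := by
      refine T.opNorm_le_bound (norm_nonneg _) fun x => ?_
      rcases eq_or_ne x 0 with rfl | hx
      · simp
      · have hxn : 0 < ‖x‖ := norm_pos_iff.2 hx
        have hu : (‖x‖⁻¹ • x) ∈ Metric.sphere (0 : EuclideanSpace ℝ (Fin n)) 1 := by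
          rw [mem_sphere_zero_iff_norm, norm_smul, norm_inv, norm_norm]
          field_simp
        have this : ‖T (‖x‖⁻¹ • x)‖ ≤ ‖T x₀‖ := hmax hu
        rw [T.map_smul, norm_smul, norm_inv, norm_norm] at this
        calc ‖T x‖ = ‖x‖ * (‖x‖⁻¹ * ‖T x‖) := by field_simp
          _ ≤ ‖x‖ * ‖T x₀‖ := by
              exact mul_le_mul_of_nonneg_left this hxn.le
          _ = ‖T x₀‖ * ‖x‖ := mul_comm _ _
    calc ‖T‖ ≤ ‖T x₀‖ := hTle
      _ < ‖x₀‖ := h x₀ hx₀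
      _ = 1 := hx₀n

/-- Congruence by an invertible matrix preserves positive definiteness. -/
lemma aux_posDef_conj {n : ℕ} {S : Matrix (Fin n) (Fin n) ℝ} (hS : S.PosDef)
    {B : Matrix (Fin n) (Fin n) ℝ} (hB : IsUnit B) : (Bᵀ * S * B).PosDef := by
  have hBinj : Function.Injective B.mulVec := mulVec_injective_iff_isUnit.2 hB
  refine posDef_iff_dotProduct_mulVec.2 ⟨?_, fun x hx => ?_⟩
  · have := isHermitian_conjTranspose_mul_mul B hS.1
    simpa [conjTranspose_eq_transpose_of_trivial] using this
  · have hBx : B *ᵥ x ≠ 0 := fun h0 => hx (hBinj (by simpa using h0))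
    have := (posDef_iff_dotProduct_mulVec.1 hS).2 (x := B *ᵥ x) hBx
    simpa only [star_mulVec, dotProduct_mulVec, vecMul_vecMul,
      conjTranspose_eq_transpose_of_trivial] using this

lemma aux_posDef_conj_iff {n : ℕ} (S : Matrix (Fin n) (Fin n) ℝ)
    {B : Matrix (Fin n) (Fin n) ℝ} (hB : IsUnit B) :
    S.PosDef ↔ (Bᵀ * S * B).PosDef := by
  constructor
  · exact fun hS => aux_posDef_conj hS hB
  · intro hS
    have hBdet : IsUnit B.det := (isUnit_iff_isUnit_det B).1 hB
    have hBi : IsUnit B⁻¹ := isUnit_nonsing_inv_iff.2 hB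
    have := aux_posDef_conj hS hBi
    have hEq : (B⁻¹)ᵀ * (Bᵀ * S * B) * B⁻¹ = S := by
      have h1 : (B⁻¹)ᵀ * Bᵀ = 1 := by
        rw [← transpose_mul, mul_nonsing_inv B hBdet, transpose_one]
      calc (B⁻¹)ᵀ * (Bᵀ * S * B) * B⁻¹
          = ((B⁻¹)ᵀ * Bᵀ) * S * (B * B⁻¹) := by
            simp only [Matrix.mul_assoc]
        _ = S := by rw [h1, mul_nonsing_inv B hBdet, Matrix.one_mul, Matrix.mul_one]
    rwa [hEq] at this

/-- `(1 - Fᵀ F)` positive definite iff the Euclidean operator norm of `F` is `< 1`. -/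
lemma aux_key3 {n : ℕ} (F : Matrix (Fin n) (Fin n) ℝ) :
    ((1 : Matrix (Fin n) (Fin n) ℝ) - Fᵀ * F).PosDef ↔
      ‖(Matrix.toEuclideanCLM (𝕜 := ℝ) F :
        EuclideanSpace ℝ (Fin n) →L[ℝ] EuclideanSpace ℝ (Fin n))‖ < 1 := by
  set T : EuclideanSpace ℝ (Fin n) →L[ℝ] EuclideanSpace ℝ (Fin n) :=
    Matrix.toEuclideanCLM (𝕜 := ℝ) F with hT
  have hdot : ∀ v : EuclideanSpace ℝ (Fin n),
      (WithLp.equiv 2 (Fin n → ℝ) v) ⬝ᵥ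
        (((1 : Matrix (Fin n) (Fin n) ℝ) - Fᵀ * F) *ᵥ (WithLp.equiv 2 (Fin n → ℝ) v)) =
      ‖v‖ ^ 2 - ‖T v‖ ^ 2 := by
    intro v
    set x : Fin n → ℝ := WithLp.equiv 2 (Fin n → ℝ) v with hx
    have hnv : ‖v‖ ^ 2 = x ⬝ᵥ x := by
      rw [← real_inner_self_eq_norm_sq]
      rw [EuclideanSpace.inner_eq_star_dotProduct]
      simp [hx]
    have hTv : ‖T v‖ ^ 2 = (F *ᵥ x) ⬝ᵥ (F *ᵥ x) := by
      rw [← real_inner_self_eq_norm_sq]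
      rw [EuclideanSpace.inner_eq_star_dotProduct]
      simp [hT, ofLp_toEuclideanCLM, toLin'_apply, hx]
    rw [sub_mulVec, dotProduct_sub, one_mulVec, hnv, hTv]
    congr 1
    rw [← mulVec_mulVec, dotProduct_mulVec, vecMul_transpose]
  constructor
  · intro hP
    refine aux_norm_lt_one T fun v hv => ?_
    have hx : (WithLp.equiv 2 (Fin n → ℝ) v) ≠ 0 := by
      intro h0
      apply hv
      have := congrArg (WithLp.equiv 2 (Fin n → ℝ)).symm h0
      simpa using this
    have hpos := (posDef_iff_dotProduct_mulVec.1 hP).2 hx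
    rw [show star (WithLp.equiv 2 (Fin n → ℝ) v) = WithLp.equiv 2 (Fin n → ℝ) v from rfl] at hpos
    rw [hdot v] at hpos
    have h2 : ‖T v‖ ^ 2 < ‖v‖ ^ 2 := by linarith
    exact lt_of_pow_lt_pow_left₀ 2 (norm_nonneg v) h2
  · intro hTn
    refine posDef_iff_dotProduct_mulVec.2 ⟨?_, fun x hx => ?_⟩
    · rw [IsHermitian, conjTranspose_eq_transpose_of_trivial, transpose_sub, transpose_one,
        transpose_mul, transpose_transpose]
    · set v : EuclideanSpace ℝ (Fin n) := (WithLp.equiv 2 (Fin n → ℝ)).symm x with hv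
      have hveq : WithLp.equiv 2 (Fin n → ℝ) v = x := rfl
      have hv0 : v ≠ 0 := by
        intro h0
        apply hx
        rw [← hveq, h0]
        rfl
      have hlt : ‖T v‖ < ‖v‖ := by
        calc ‖T v‖ ≤ ‖T‖ * ‖v‖ := T.le_opNorm v
          _ < 1 * ‖v‖ := by
              exact mul_lt_mul_of_pos_right hTn (norm_pos_iff.2 hv0)
          _ = ‖v‖ := one_mul _
      have h2 : ‖T v‖ ^ 2 < ‖v‖ ^ 2 := by
        exact pow_lt_pow_left₀ hlt (norm_nonneg _) (by norm_num)
      have := hdot v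
      rw [hveq] at this
      show (0 : ℝ) < star x ⬝ᵥ _
      rw [show star x = x from rfl, this]
      linarith

/-- M + Mᵀ − A is SPD iff the stationary iteration with M is A-convergent, i.e.
the spectral norm of I − A^{1/2} M⁻¹ A^{1/2} is less than 1. -/
theorem stmt_5 {n : ℕ}
    (A M R : Matrix (Fin n) (Fin n) ℝ) (hA : A.PosDef)
    (hR : R.PosDef) (hR2 : R * R = A)
    (hM : IsUnit M) :
    (M + Mᵀ - A).PosDef ↔
      ‖(Matrix.toEuclideanCLM (𝕜 := ℝ)
          ((1 : Matrix (Fin n) (Fin n) ℝ) - R * M⁻¹ * R) :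
        EuclideanSpace ℝ (Fin n) →L[ℝ] EuclideanSpace ℝ (Fin n))‖ < 1 := by
  classical
  have hMdet : IsUnit M.det := (isUnit_iff_isUnit_det M).1 hM
  have hMM : M * M⁻¹ = 1 := mul_nonsing_inv M hMdet
  have hMM' : M⁻¹ * M = 1 := nonsing_inv_mul M hMdet
  have hRt : Rᵀ = R := by
    rw [← conjTranspose_eq_transpose_of_trivial]; exact hR.1
  have hRu : IsUnit R := hR.isUnit
  have hMiu : IsUnit M⁻¹ := isUnit_nonsing_inv_iff.2 hM
  have hBu : IsUnit (M⁻¹ * R) := hMiu.mul hRu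
  set E : Matrix (Fin n) (Fin n) ℝ := 1 - R * M⁻¹ * R with hE
  -- algebraic identity
  have e1 : ∀ X : Matrix (Fin n) (Fin n) ℝ, M * (M⁻¹ * X) = X := fun X => by
    rw [← Matrix.mul_assoc, hMM, Matrix.one_mul]
  have e3 : ∀ X : Matrix (Fin n) (Fin n) ℝ, (M⁻¹)ᵀ * (Mᵀ * X) = X := fun X => by
    rw [← Matrix.mul_assoc, ← transpose_mul, hMM, transpose_one, Matrix.one_mul]
  have hBt : (M⁻¹ * R)ᵀ = R * (M⁻¹)ᵀ := by rw [transpose_mul, hRt]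
  have hEt : Eᵀ = 1 - R * (M⁻¹)ᵀ * R := by
    rw [hE, transpose_sub, transpose_one, transpose_mul, transpose_mul, hRt, ← Matrix.mul_assoc]
  have h1 : (M⁻¹ * R)ᵀ * M * (M⁻¹ * R) = R * (M⁻¹)ᵀ * R := by
    rw [hBt]
    simp only [Matrix.mul_assoc, e1]
  have h2 : (M⁻¹ * R)ᵀ * Mᵀ * (M⁻¹ * R) = R * M⁻¹ * R := by
    rw [hBt]
    simp only [Matrix.mul_assoc, e3]
  have h3 : (M⁻¹ * R)ᵀ * A * (M⁻¹ * R) = (R * (M⁻¹)ᵀ * R) * (R * M⁻¹ * R) := by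
    rw [hBt, ← hR2]
    simp only [Matrix.mul_assoc]
  have key : (M⁻¹ * R)ᵀ * (M + Mᵀ - A) * (M⁻¹ * R) = 1 - Eᵀ * E := by
    rw [Matrix.mul_sub, Matrix.mul_add, Matrix.sub_mul, Matrix.add_mul, h1, h2, h3, hEt, hE]
    noncomm_ring
  rw [aux_posDef_conj_iff (M + Mᵀ - A) hBu, key]
  exact aux_key3 E
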